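/- Let X be uniform on {0, ..., 2^w − 1} and Y = 1 + ⌊m·X/2^w⌋ with m ≤ 2^w. For each y ∈ {1,...,m}, the number of x with Y = y is either ⌊2^w/m⌋ or ⌈2^w/m⌉; hence the ratio of the largest to smallest selection probability equals ⌈2^w/m⌉/⌊2^w/m⌋. -/

import Mathlib

/-- ceiling boundary `c k = ⌈N·k/m⌉`. -/
def stmt11c (N m k : ℕ) : ℕ := (N * k + m - 1) / m

lemma stmt11_le_c_iff (N m : ℕ) (hm : 0 < m) (k x : ℕ) :
    stmt11c N m k ≤ x ↔ N * k ≤ m * x := by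
  unfold stmt11c
  rw [Nat.div_le_iff_le_mul_add_pred hm]
  omega

lemma stmt11_lt_c_iff (N m : ℕ) (hm : 0 < m) (k x : ℕ) :
    x < stmt11c N m k ↔ m * x < N * k := by
  rw [← not_le, ← not_le, stmt11_le_c_iff N m hm]

lemma stmt11_fiber (N m : ℕ) (hm : 0 < m) (hN : m ≤ N) (k : ℕ) (hk : k < m) :
    (Finset.range N).filter (fun x => m * x / N = k) =
      Finset.Ico (stmt11c N m k) (stmt11c N m (k + 1)) := by
  have hN0 : 0 < N := lt_of_lt_of_le hm hN
  ext x
  simp only [Finset.mem_filter, Finset.mem_range, Finset.mem_Ico,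
    stmt11_le_c_iff N m hm, stmt11_lt_c_iff N m hm]
  constructor
  · rintro ⟨hx, rfl⟩
    constructor
    · calc N * (m * x / N) = (m * x / N) * N := by ring
        _ ≤ m * x := Nat.div_mul_le_self _ _
    · have h1 : m * x / N < m * x / N + 1 := Nat.lt_succ_self _
      have h2 := (Nat.div_lt_iff_lt_mul hN0).mp h1
      calc m * x < (m * x / N + 1) * N := h2
        _ = N * (m * x / N + 1) := by ring
  · rintro ⟨h1, h2⟩
    have hxN : x < N := by
      have hA : m * x < N * m := lt_of_lt_of_le h2 (Nat.mul_le_mul_left _ hk)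
      have hB : m * x < m * N := by linarith
      exact Nat.lt_of_mul_lt_mul_left hB
    refine ⟨hxN, ?_⟩
    have hk1 : k ≤ m * x / N := (Nat.le_div_iff_mul_le hN0).mpr (by linarith)
    have hk2 : m * x / N < k + 1 := (Nat.div_lt_iff_lt_mul hN0).mpr (by linarith)
    omega

lemma stmt11_c_succ (N m : ℕ) (hm : 0 < m) (k : ℕ) :
    stmt11c N m (k + 1) =
      stmt11c N m k + ((N * k + m - 1) % m + N) / m := by
  unfold stmt11c
  have e1 : N * (k + 1) + m - 1 = (N * k + m - 1) + N := by
    rw [Nat.mul_succ]; omega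
  rw [e1]
  conv_lhs => rw [← Nat.div_add_mod (N * k + m - 1) m]
  rw [add_assoc, Nat.mul_add_div hm]

lemma stmt11_step (N m : ℕ) (hm : 0 < m) (k : ℕ) :
    stmt11c N m k + N / m ≤ stmt11c N m (k + 1) ∧
      stmt11c N m (k + 1) ≤ stmt11c N m k + (N + m - 1) / m := by
  rw [stmt11_c_succ N m hm]
  have hmod : (N * k + m - 1) % m ≤ m - 1 := by
    have := Nat.mod_lt (N * k + m - 1) hm; omega
  constructor
  · have : N / m ≤ ((N * k + m - 1) % m + N) / m :=
      Nat.div_le_div_right (Nat.le_add_left _ _)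
    omega
  · have : ((N * k + m - 1) % m + N) / m ≤ (N + m - 1) / m :=
      Nat.div_le_div_right (by omega)
    omega

theorem stmt11 (w m : ℕ) (hm : 0 < m) (hm2 : m ≤ 2 ^ w) :
    (∀ y ∈ Finset.Icc 1 m,
      ((Finset.range (2 ^ w)).filter (fun x => 1 + m * x / 2 ^ w = y)).card = 2 ^ w / m ∨
      ((Finset.range (2 ^ w)).filter (fun x => 1 + m * x / 2 ^ w = y)).card = (2 ^ w + m - 1) / m) ∧
    ((((Finset.Icc 1 m).sup
        (fun y => ((Finset.range (2 ^ w)).filter (fun x => 1 + m * x / 2 ^ w = y)).card) : ℕ) : ℝ) /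
      (((Finset.Icc 1 m).inf'
        (by exact Finset.nonempty_Icc.mpr hm)
        (fun y => ((Finset.range (2 ^ w)).filter (fun x => 1 + m * x / 2 ^ w = y)).card) : ℕ) : ℝ)
      = (((2 ^ w + m - 1) / m : ℕ) : ℝ) / ((2 ^ w / m : ℕ) : ℝ)) := by
  set N := 2 ^ w with hNdef
  have hN0 : 0 < N := lt_of_lt_of_le hm hm2
  set f : ℕ → ℕ :=
    fun y => ((Finset.range N).filter (fun x => 1 + m * x / N = y)).card with hf
  -- rewrite filters
  have hfilter : ∀ y ∈ Finset.Icc 1 m,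
      (Finset.range N).filter (fun x => 1 + m * x / N = y) =
        Finset.Ico (stmt11c N m (y - 1)) (stmt11c N m (y - 1 + 1)) := by
    intro y hy
    rw [Finset.mem_Icc] at hy
    have h1 : (Finset.range N).filter (fun x => 1 + m * x / N = y) =
        (Finset.range N).filter (fun x => m * x / N = y - 1) := by
      apply Finset.filter_congr
      intro x _
      constructor <;> intro h <;> omega
    rw [h1, stmt11_fiber N m hm hm2 (y - 1) (by omega)]
  have hcard : ∀ y ∈ Finset.Icc 1 m,
      f y = stmt11c N m (y - 1 + 1) - stmt11c N m (y - 1) := by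
    intro y hy
    simp only [hf]
    rw [hfilter y hy, Nat.card_Ico]
  -- bounds
  have hceil_ge : N / m ≤ (N + m - 1) / m := Nat.div_le_div_right (by omega)
  have hbounds : ∀ y ∈ Finset.Icc 1 m, N / m ≤ f y ∧ f y ≤ (N + m - 1) / m := by
    intro y hy
    obtain ⟨h1, h2⟩ := stmt11_step N m hm (y - 1)
    rw [hcard y hy]
    revert h1 h2 hceil_ge
    generalize stmt11c N m (y - 1) = a
    generalize stmt11c N m (y - 1 + 1) = b
    generalize N / m = p
    generalize (N + m - 1) / m = q
    intro h0 h1 h2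
    omega
  have hmod := Nat.div_add_mod N m
  have hmodlt : N % m < m := Nat.mod_lt _ hm
  -- ceil = floor or floor+1
  have he : N + m - 1 = m * (N / m) + (N % m + m - 1) := by omega
  have hceil : ((N + m - 1) / m = N / m ∧ N % m = 0) ∨
      ((N + m - 1) / m = N / m + 1 ∧ N % m ≠ 0) := by
    rcases Nat.eq_zero_or_pos (N % m) with h0 | h0
    · left
      refine ⟨?_, h0⟩
      have h1 : N + m - 1 = m * (N / m) + (m - 1) := by omega
      rw [h1, Nat.mul_add_div hm, Nat.div_eq_of_lt (show m - 1 < m by omega), add_zero]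
    · right
      refine ⟨?_, by omega⟩
      have h1 : N + m - 1 = m * (N / m + 1) + (N % m - 1) := by
        have h2 : m * (N / m + 1) = m * (N / m) + m := by ring
        omega
      rw [h1, Nat.mul_add_div hm, Nat.div_eq_of_lt (show N % m - 1 < m by omega), add_zero]
  have hceilw : (N + m - 1) / m = N / m ∨ (N + m - 1) / m = N / m + 1 := by
    rcases hceil with ⟨h, _⟩ | ⟨h, _⟩
    · exact Or.inl h
    · exact Or.inr h
  have part1 : ∀ y ∈ Finset.Icc 1 m, f y = N / m ∨ f y = (N + m - 1) / m := by
    intro y hy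
    have := hbounds y hy
    rcases hceilw with h | h <;> omega
  refine ⟨part1, ?_⟩
  -- total count
  have hsum : ∑ y ∈ Finset.Icc 1 m, f y = N := by
    have h := Finset.card_eq_sum_card_fiberwise (f := fun x => 1 + m * x / N)
      (s := Finset.range N) (t := Finset.Icc 1 m) ?_
    · rw [Finset.card_range] at h
      simp only [hf]
      exact h.symm
    · intro x hx
      rw [Finset.mem_coe, Finset.mem_range] at hx
      simp only [Finset.mem_coe, Finset.mem_Icc]
      have h1 : m * x / N < m :=
        (Nat.div_lt_iff_lt_mul hN0).mpr (mul_lt_mul_of_pos_left hx hm)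
      exact ⟨Nat.le_add_right 1 _, by omega⟩
  have h1mem : (1 : ℕ) ∈ Finset.Icc 1 m := Finset.mem_Icc.mpr ⟨le_rfl, by omega⟩
  -- sup = ceil
  have hsup : (Finset.Icc 1 m).sup f = (N + m - 1) / m := by
    apply le_antisymm
    · exact Finset.sup_le fun y hy => (hbounds y hy).2
    · by_contra hcon
      push_neg at hcon
      have hall : ∀ y ∈ Finset.Icc 1 m, f y ≤ N / m := by
        intro y hy
        rcases part1 y hy with h | h
        · omega
        · exfalso
          have := Finset.le_sup (f := f) hy
          omega
      have hle : ∑ y ∈ Finset.Icc 1 m, f y ≤ ∑ y ∈ Finset.Icc 1 m, N / m :=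
        Finset.sum_le_sum hall
      rw [hsum, Finset.sum_const, Nat.card_Icc] at hle
      simp only [smul_eq_mul] at hle
      have hfl : (m + 1 - 1) * (N / m) = m * (N / m) := by norm_num
      rw [hfl] at hle
      have hNm : N % m = 0 := by omega
      rcases hceil with ⟨h, _⟩ | ⟨_, h⟩
      · have hb := hbounds 1 h1mem
        have hs := Finset.le_sup (f := f) h1mem
        omega
      · exact h hNm
  -- inf' = floor
  have hinf : ∀ hne : (Finset.Icc 1 m).Nonempty,
      (Finset.Icc 1 m).inf' hne f = N / m := by
    intro hne
    apply le_antisymm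
    · by_contra hcon
      push_neg at hcon
      have hall : ∀ y ∈ Finset.Icc 1 m, (N + m - 1) / m ≤ f y := by
        intro y hy
        rcases part1 y hy with h | h
        · exfalso
          have := Finset.inf'_le f hy
          omega
        · omega
      have hle : ∑ y ∈ Finset.Icc 1 m, (N + m - 1) / m ≤ ∑ y ∈ Finset.Icc 1 m, f y :=
        Finset.sum_le_sum hall
      rw [hsum, Finset.sum_const, Nat.card_Icc] at hle
      simp only [smul_eq_mul] at hle
      have hfl : (m + 1 - 1) * ((N + m - 1) / m) = m * ((N + m - 1) / m) := by norm_num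
      rw [hfl] at hle
      rcases hceil with ⟨h, _⟩ | ⟨h, _⟩
      · have hb := hbounds 1 h1mem
        have hi := Finset.inf'_le f h1mem
        omega
      · rw [h] at hle
        have hexp : m * (N / m + 1) = m * (N / m) + m := by ring
        omega
    · exact Finset.le_inf' hne f fun y hy => (hbounds y hy).1
  rw [hsup, hinf]
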